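/- The fair coin problem achieves stochastic identification: there exists a test M (a function from finite binary sequences to {Fair, Unfair}) such that for every δ ∈ (0,1) and every θ ∈ [0,1], there exists N such that for all n ≥ N, the probability under the i.i.d. Bernoulli(θ) measure that M outputs the true hypothesis (Fair if θ = 1/2, Unfair otherwise) on a length-n sample exceeds 1 − δ. -/

import Mathlib

open Classical in
/-- The probability, under i.i.d. Bernoulli(θ) sampling, that a length-`n` binary
sample satisfies the predicate `A`. -/
noncomputable def bernoulliPr (θ : ℝ) (n : ℕ) (A : (Fin n → Bool) → Prop) : ℝ :=
  ∑ s : Fin n → Bool, if A s then ∏ i, (if s i then θ else 1 - θ) else 0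

open Classical Finset

noncomputable def wgt (θ : ℝ) (b : Bool) : ℝ := if b then θ else 1 - θ
noncomputable def dv (θ : ℝ) (b : Bool) : ℝ := (if b then (1:ℝ) else 0) - θ

lemma factor {n : ℕ} (f : Fin n → Bool → ℝ) :
    ∑ s : Fin n → Bool, ∏ i, f i (s i) = ∏ i, (f i true + f i false) := by
  calc ∑ s : Fin n → Bool, ∏ i, f i (s i)
      = ∑ s ∈ Fintype.piFinset (fun _ : Fin n => (Finset.univ : Finset Bool)),
          ∏ i, f i (s i) := by rw [Fintype.piFinset_univ]
    _ = ∏ i, ∑ b : Bool, f i b := (Finset.prod_univ_sum _ _).symm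
    _ = ∏ i, (f i true + f i false) := by simp [Fintype.sum_bool]

lemma wgt_nonneg {θ : ℝ} (h0 : 0 ≤ θ) (h1 : θ ≤ 1) (b : Bool) : 0 ≤ wgt θ b := by
  cases b <;> simp [wgt] <;> linarith

lemma W_nonneg {θ : ℝ} (h0 : 0 ≤ θ) (h1 : θ ≤ 1) {n : ℕ} (s : Fin n → Bool) :
    0 ≤ ∏ i, wgt θ (s i) :=
  Finset.prod_nonneg fun i _ => wgt_nonneg h0 h1 _

lemma mass (θ : ℝ) (n : ℕ) : ∑ s : Fin n → Bool, ∏ i, wgt θ (s i) = 1 := by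
  rw [factor]; simp [wgt]

lemma pair (θ : ℝ) {n : ℕ} (i j : Fin n) :
    ∑ s : Fin n → Bool, (∏ k, wgt θ (s k)) * (dv θ (s i) * dv θ (s j))
      = if i = j then θ * (1 - θ) else 0 := by
  have h1 : ∀ s : Fin n → Bool,
      (∏ k, wgt θ (s k)) * (dv θ (s i) * dv θ (s j))
      = ∏ k, (wgt θ (s k) * ((if k = i then dv θ (s k) else 1) *
          (if k = j then dv θ (s k) else 1))) := by
    intro s
    rw [Finset.prod_mul_distrib, Finset.prod_mul_distrib,
      Finset.prod_ite_eq' univ i (fun k => dv θ (s k)),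
      Finset.prod_ite_eq' univ j (fun k => dv θ (s k))]
    simp
  simp_rw [h1]
  rw [factor (fun k b => wgt θ b * ((if k = i then dv θ b else 1) * if k = j then dv θ b else 1))]
  by_cases hij : i = j
  · subst hij
    rw [Finset.prod_eq_single i]
    · simp [wgt, dv]; ring
    · intro k _ hk; simp [hk, wgt]
    · simp
  · rw [if_neg hij]
    apply Finset.prod_eq_zero (Finset.mem_univ i)
    simp [hij, wgt, dv]; ring

lemma secondmoment (θ : ℝ) (n : ℕ) :
    ∑ s : Fin n → Bool, (∏ k, wgt θ (s k)) * (∑ i, dv θ (s i)) ^ 2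
      = n * (θ * (1 - θ)) := by
  have h1 : ∀ s : Fin n → Bool, (∑ i, dv θ (s i)) ^ 2
      = ∑ i, ∑ j, dv θ (s i) * dv θ (s j) := by
    intro s; rw [sq, Finset.sum_mul_sum]
  simp_rw [h1, Finset.mul_sum]
  rw [Finset.sum_comm]
  have : ∀ i : Fin n, ∑ s : Fin n → Bool, ∑ j, (∏ k, wgt θ (s k)) * (dv θ (s i) * dv θ (s j))
      = θ * (1 - θ) := by
    intro i
    rw [Finset.sum_comm]
    have := fun j => pair θ i j
    simp_rw [this]
    simp
  simp_rw [this]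
  simp [mul_comm]

lemma cheb {θ : ℝ} (h0 : 0 ≤ θ) (h1 : θ ≤ 1) (n : ℕ) {t : ℝ} (ht : 0 < t) :
    bernoulliPr θ n (fun s => t ≤ |∑ i, dv θ (s i)|)
      ≤ n * (θ * (1 - θ)) / t ^ 2 := by
  have key : bernoulliPr θ n (fun s => t ≤ |∑ i, dv θ (s i)|)
      ≤ ∑ s : Fin n → Bool, (∏ k, wgt θ (s k)) * ((∑ i, dv θ (s i)) ^ 2 / t ^ 2) := by
    apply Finset.sum_le_sum
    intro s _
    by_cases hs : t ≤ |∑ i, dv θ (s i)|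
    · rw [if_pos hs]
      have hW : 0 ≤ ∏ k, wgt θ (s k) := W_nonneg h0 h1 s
      have ht2 : t ^ 2 ≤ (∑ i, dv θ (s i)) ^ 2 := by
        have := sq_abs (∑ i, dv θ (s i))
        nlinarith [abs_nonneg (∑ i, dv θ (s i))]
      have : (1:ℝ) ≤ (∑ i, dv θ (s i)) ^ 2 / t ^ 2 := by
        rw [le_div_iff₀ (by positivity)]; linarith
      calc (∏ i, if s i then θ else 1 - θ) = ∏ k, wgt θ (s k) := rfl
        _ = (∏ k, wgt θ (s k)) * 1 := by ring
        _ ≤ _ := by apply mul_le_mul_of_nonneg_left this hW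
    · rw [if_neg hs]
      have hW : 0 ≤ ∏ k, wgt θ (s k) := W_nonneg h0 h1 s
      positivity
  calc bernoulliPr θ n _ ≤ _ := key
    _ = (∑ s : Fin n → Bool, (∏ k, wgt θ (s k)) * (∑ i, dv θ (s i)) ^ 2) / t ^ 2 := by
        rw [Finset.sum_div]; simp_rw [mul_div_assoc]
    _ = n * (θ * (1 - θ)) / t ^ 2 := by rw [secondmoment]

lemma mono {θ : ℝ} (h0 : 0 ≤ θ) (h1 : θ ≤ 1) (n : ℕ) {A B : (Fin n → Bool) → Prop}
    (h : ∀ s, A s → B s) : bernoulliPr θ n A ≤ bernoulliPr θ n B := by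
  apply Finset.sum_le_sum
  intro s _
  by_cases hs : A s
  · rw [if_pos hs, if_pos (h s hs)]
  · rw [if_neg hs]
    by_cases hs' : B s
    · rw [if_pos hs']; exact W_nonneg h0 h1 s
    · rw [if_neg hs']

lemma compl (θ : ℝ) (n : ℕ) (A : (Fin n → Bool) → Prop) :
    bernoulliPr θ n A = 1 - bernoulliPr θ n (fun s => ¬ A s) := by
  have : bernoulliPr θ n A + bernoulliPr θ n (fun s => ¬ A s)
      = ∑ s : Fin n → Bool, ∏ k, wgt θ (s k) := by
    unfold bernoulliPr
    rw [← Finset.sum_add_distrib]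
    apply Finset.sum_congr rfl
    intro s _
    by_cases hs : A s <;> simp [hs, wgt]
  rw [mass] at this
  linarith

noncomputable def cnt (l : List Bool) : ℝ :=
  ∑ i : Fin l.length, if l.get i then (1:ℝ) else 0

noncomputable def Mtest (l : List Bool) : Bool :=
  if |cnt l - l.length / 2| < Real.sqrt (l.length * Real.sqrt l.length) then true else false

lemma cnt_ofFn {n : ℕ} (s : Fin n → Bool) :
    cnt (List.ofFn s) = ∑ i : Fin n, if s i then (1:ℝ) else 0 := by
  unfold cnt
  simp_rw [List.get_ofFn]
  exact Fin.sum_congr' (fun i : Fin n => if s i then (1:ℝ) else 0) (List.length_ofFn : (List.ofFn s).length = n)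

lemma sum_dv {θ : ℝ} {n : ℕ} (s : Fin n → Bool) :
    ∑ i, dv θ (s i) = (∑ i : Fin n, if s i then (1:ℝ) else 0) - n * θ := by
  unfold dv
  rw [Finset.sum_sub_distrib]
  simp [mul_comm]

open Classical in
/-- the fair coin problem achieves stochastic identification: some test
M : finite binary sequences → {Fair, Unfair} (true = Fair) is such that for every
δ ∈ (0,1) and every θ ∈ [0,1], eventually the probability that M outputs the true
hypothesis (Fair iff θ = 1/2) on a length-n sample exceeds 1 − δ. -/
theorem fair_coin_stochastic_identification :
    ∃ M : List Bool → Bool,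
      ∀ δ : ℝ, 0 < δ → δ < 1 →
        ∀ θ ∈ Set.Icc (0:ℝ) 1,
          ∃ N : ℕ, ∀ n ≥ N,
            1 - δ < bernoulliPr θ n
              (fun s => M (List.ofFn s) = (if θ = 1/2 then true else false)) := by
  refine ⟨Mtest, ?_⟩
  intro δ hδ0 hδ1 θ hθ
  obtain ⟨hθ0, hθ1⟩ := hθ
  by_cases hθf : θ = 1/2
  · -- fair case
    subst hθf
    refine ⟨⌈(1/(4*δ))^2⌉₊ + 1, ?_⟩
    intro n hn
    have heq : (fun s : Fin n → Bool => Mtest (List.ofFn s) = (if (1:ℝ)/2 = 1/2 then true else false))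
        = (fun s : Fin n → Bool => Mtest (List.ofFn s) = true) := by
      funext s; rw [if_pos rfl]
    rw [heq]
    have hnn : (1:ℝ) ≤ n := by
      have : 1 ≤ n := le_trans (Nat.le_add_left 1 _) hn
      exact_mod_cast this
    have hn0 : (0:ℝ) < n := by linarith
    have hsn : (0:ℝ) < Real.sqrt n := Real.sqrt_pos.2 hn0
    have ht : 0 < Real.sqrt ((n:ℝ) * Real.sqrt n) := Real.sqrt_pos.2 (by positivity)
    have hsub : ∀ s : Fin n → Bool, ¬ (Mtest (List.ofFn s) = true) →
        Real.sqrt ((n:ℝ) * Real.sqrt n) ≤ |∑ i, dv (1/2) (s i)| := by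
      intro s hs
      by_cases hc : |cnt (List.ofFn s) - ((List.ofFn s).length : ℝ)/2| <
          Real.sqrt (((List.ofFn s).length : ℝ) * Real.sqrt ((List.ofFn s).length : ℝ))
      · exact absurd (by unfold Mtest; rw [if_pos hc]) hs
      · push_neg at hc
        rw [cnt_ofFn, List.length_ofFn] at hc
        rw [sum_dv]
        have h2 : (n:ℝ) * (1/2) = (n:ℝ)/2 := by ring
        rw [h2]
        exact hc
    have hmono := mono (θ := 1/2) (by norm_num) (by norm_num) n hsub
    have hbound := cheb (θ := 1/2) (by norm_num) (by norm_num) n ht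
    have hsq : Real.sqrt ((n:ℝ) * Real.sqrt n) ^ 2 = (n:ℝ) * Real.sqrt n :=
      Real.sq_sqrt (by positivity)
    have hval : (n:ℝ) * (1/2 * (1 - 1/2)) / Real.sqrt ((n:ℝ) * Real.sqrt n) ^ 2
        = 1 / (4 * Real.sqrt n) := by
      rw [hsq]; field_simp; ring
    have hsngt : 1/(4*δ) < Real.sqrt n := by
      have h1 : ((1/(4*δ))^2 : ℝ) < n := by
        have h2 : ((1/(4*δ))^2 : ℝ) ≤ ⌈(1/(4*δ))^2⌉₊ := Nat.le_ceil _
        have h3 : ((⌈(1/(4*δ))^2⌉₊ + 1 : ℕ) : ℝ) ≤ n := by exact_mod_cast hn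
        push_cast at h3
        linarith
      calc 1/(4*δ) = Real.sqrt ((1/(4*δ))^2) := (Real.sqrt_sq (by positivity)).symm
        _ < Real.sqrt n := Real.sqrt_lt_sqrt (by positivity) h1
    have hδn : 1 / (4 * Real.sqrt n) < δ := by
      rw [div_lt_iff₀ (by positivity)]
      have h4 : 1/(4*δ) * (4*δ) < Real.sqrt n * (4*δ) := by
        apply mul_lt_mul_of_pos_right hsngt (by positivity)
      rw [one_div_mul_cancel (by positivity)] at h4
      linarith
    rw [_root_.compl]
    have := le_trans hmono hbound
    rw [hval] at this
    linarith
  · -- unfair case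
    set a := |θ - 1/2| with ha
    have ha0 : 0 < a := abs_pos.2 (sub_ne_zero.2 hθf)
    have ha2 : a^2 = (θ - 1/2)^2 := sq_abs _
    refine ⟨max (⌈(4/a^2)^2⌉₊ + 1) (⌈1/(δ*a^2)⌉₊ + 1), ?_⟩
    intro n hn
    have heq : (fun s : Fin n → Bool => Mtest (List.ofFn s) = (if θ = 1/2 then true else false))
        = (fun s : Fin n → Bool => Mtest (List.ofFn s) = false) := by
      funext s; rw [if_neg hθf]
    rw [heq]
    have hn1 : ⌈(4/a^2)^2⌉₊ + 1 ≤ n := le_trans (le_max_left _ _) hn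
    have hn2 : ⌈1/(δ*a^2)⌉₊ + 1 ≤ n := le_trans (le_max_right _ _) hn
    have hnn : (1:ℝ) ≤ n := by
      have : 1 ≤ n := le_trans (Nat.le_add_left 1 _) hn1
      exact_mod_cast this
    have hn0 : (0:ℝ) < n := by linarith
    have hsn : (0:ℝ) < Real.sqrt n := Real.sqrt_pos.2 hn0
    have hsqn : Real.sqrt n * Real.sqrt n = (n:ℝ) := Real.mul_self_sqrt (le_of_lt hn0)
    -- √n > 4/a²
    have hsngt : 4/a^2 < Real.sqrt n := by
      have h1 : ((4/a^2)^2 : ℝ) < n := by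
        have h2 : ((4/a^2)^2 : ℝ) ≤ ⌈(4/a^2)^2⌉₊ := Nat.le_ceil _
        have h3 : ((⌈(4/a^2)^2⌉₊ + 1 : ℕ) : ℝ) ≤ n := by exact_mod_cast hn1
        push_cast at h3
        linarith
      calc 4/a^2 = Real.sqrt ((4/a^2)^2) := (Real.sqrt_sq (by positivity)).symm
        _ < Real.sqrt n := Real.sqrt_lt_sqrt (by positivity) h1
    -- √(n√n) ≤ n a / 2
    have hstep : Real.sqrt ((n:ℝ) * Real.sqrt n) ≤ (n:ℝ) * a / 2 := by
      have h5 : 4 < Real.sqrt n * a^2 := by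
        rw [div_lt_iff₀ (by positivity)] at hsngt
        linarith
      have h6 : Real.sqrt n ≤ (n:ℝ) * a^2 / 4 := by
        nlinarith [mul_lt_mul_of_pos_left h5 hsn]
      have h7 : (n:ℝ) * Real.sqrt n ≤ ((n:ℝ) * a / 2)^2 := by
        nlinarith
      calc Real.sqrt ((n:ℝ) * Real.sqrt n) ≤ Real.sqrt (((n:ℝ) * a / 2)^2) :=
            Real.sqrt_le_sqrt h7
        _ = (n:ℝ) * a / 2 := Real.sqrt_sq (by positivity)
    have ht : (0:ℝ) < (n:ℝ) * a / 2 := by positivity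
    have hsub : ∀ s : Fin n → Bool, ¬ (Mtest (List.ofFn s) = false) →
        (n:ℝ) * a / 2 ≤ |∑ i, dv θ (s i)| := by
      intro s hs
      have hc : |cnt (List.ofFn s) - ((List.ofFn s).length : ℝ)/2| <
          Real.sqrt (((List.ofFn s).length : ℝ) * Real.sqrt ((List.ofFn s).length : ℝ)) := by
        by_contra hc
        exact hs (by unfold Mtest; rw [if_neg hc])
      rw [cnt_ofFn, List.length_ofFn] at hc
      set C := ∑ i : Fin n, if s i then (1:ℝ) else 0 with hC
      rw [sum_dv]
      have htri : |(n:ℝ)*θ - (n:ℝ)/2| ≤ |(n:ℝ)*θ - C| + |C - (n:ℝ)/2| := abs_sub_le _ _ _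
      have habs : |(n:ℝ)*θ - (n:ℝ)/2| = (n:ℝ) * a := by
        have he : (n:ℝ)*θ - (n:ℝ)/2 = (n:ℝ) * (θ - 1/2) := by ring
        rw [he, abs_mul, abs_of_pos hn0, ha]
      have hcomm : |(n:ℝ)*θ - C| = |C - (n:ℝ)*θ| := abs_sub_comm _ _
      have hlt : |C - (n:ℝ)/2| < (n:ℝ) * a / 2 := lt_of_lt_of_le hc hstep
      rw [habs, hcomm] at htri
      linarith
    have hmono := mono hθ0 hθ1 n hsub
    have hbound := cheb hθ0 hθ1 n ht
    have hle : (n:ℝ) * (θ*(1-θ)) / ((n:ℝ)*a/2)^2 ≤ 1/((n:ℝ)*a^2) := by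
      rw [div_le_div_iff₀ (by positivity) (by positivity)]
      have hq : θ*(1-θ) ≤ 1/4 := by nlinarith [sq_nonneg (θ - 1/2)]
      have hstep1 : (n:ℝ) * (θ*(1-θ)) * ((n:ℝ)*a^2) ≤ (n:ℝ) * (1/4) * ((n:ℝ)*a^2) := by
        apply mul_le_mul_of_nonneg_right _ (by positivity)
        apply mul_le_mul_of_nonneg_left hq (le_of_lt hn0)
      have hstep2 : (n:ℝ) * (1/4) * ((n:ℝ)*a^2) = 1 * ((n:ℝ)*a/2)^2 := by ring
      linarith
    have hfin : 1/((n:ℝ)*a^2) < δ := by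
      have h1 : (1/(δ*a^2) : ℝ) < n := by
        have h2 : (1/(δ*a^2) : ℝ) ≤ ⌈1/(δ*a^2)⌉₊ := Nat.le_ceil _
        have h3 : ((⌈1/(δ*a^2)⌉₊ + 1 : ℕ) : ℝ) ≤ n := by exact_mod_cast hn2
        push_cast at h3
        linarith
      rw [div_lt_iff₀ (by positivity)]
      rw [div_lt_iff₀ (by positivity)] at h1
      calc (1:ℝ) < n * (δ*a^2) := h1
        _ = δ * ((n:ℝ)*a^2) := by ring
    rw [_root_.compl]
    have := le_trans hmono hbound
    linarith [lt_of_le_of_lt hle hfin]
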